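/- arXiv:2002.06461 — 2 statements merged into one kernel-verified Lean document; each statement's English description precedes it below -/
import Mathlib

section
/- Let G be a finite group and Σ a symmetric subset of G (i.e., closed under inverses). Then Σ generates G if and only if for every nontrivial irreducible complex representation ρ of G, the largest eigenvalue of the Hermitian matrix A_ρ(Σ) := Σ_{s∈Σ} ρ(s) is strictly less than |Σ|. -/
open CategoryTheory
open scoped ComplexConjugate Classical


namespace Stmt0Aux

variable {G : Type} [Group G] [Fintype G]

section Forward

variable {W : Type} [AddCommGroup W] [Module ℂ W] [FiniteDimensional ℂ W]

noncomputable def innerAux (ρ : Representation ℂ G W) (x y : W) : ℂ :=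
  ∑ g : G, ∑ i, conj ((Module.finBasis ℂ W).repr (ρ g x) i) *
      ((Module.finBasis ℂ W).repr (ρ g y) i)

lemma innerAux_self (ρ : Representation ℂ G W) (x : W) :
    innerAux ρ x x =
      ((∑ g : G, ∑ i, Complex.normSq ((Module.finBasis ℂ W).repr (ρ g x) i) : ℝ) : ℂ) := by
  unfold innerAux
  push_cast
  refine Finset.sum_congr rfl fun g _ => Finset.sum_congr rfl fun i _ => ?_
  rw [Complex.normSq_eq_conj_mul_self]

/-- An invariant inner product for a finite group representation, obtained by averaging. -/
noncomputable def invCore (ρ : Representation ℂ G W) : InnerProductSpace.Core ℂ W where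
  inner x y := innerAux ρ x y
  conj_inner_symm x y := by
    unfold innerAux
    simp only [map_sum, map_mul, RingHomCompTriple.comp_apply, Complex.conj_conj]
    simp [mul_comm]
  re_inner_nonneg x := by
    show 0 ≤ RCLike.re (innerAux ρ x x)
    rw [innerAux_self]
    simp only [RCLike.re_to_complex, Complex.ofReal_re]
    refine Finset.sum_nonneg fun g _ => Finset.sum_nonneg fun i _ => Complex.normSq_nonneg _
  add_left x y z := by
    unfold innerAux
    simp [map_add, add_mul, Finset.sum_add_distrib]
  smul_left x y r := by
    unfold innerAux
    simp [Finset.mul_sum, mul_assoc, mul_left_comm]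
  definite x hx := by
    replace hx : innerAux ρ x x = 0 := hx
    rw [innerAux_self, Complex.ofReal_eq_zero] at hx
    have hz := (Finset.sum_eq_zero_iff_of_nonneg (fun g _ => Finset.sum_nonneg
      (fun i _ => Complex.normSq_nonneg _))).1 hx
    have h0 : ∀ i, ((Module.finBasis ℂ W).repr (ρ 1 x)) i = 0 := fun i =>
      Complex.normSq_eq_zero.1 <|
        (Finset.sum_eq_zero_iff_of_nonneg (fun i _ => Complex.normSq_nonneg _)).1
          (hz 1 (Finset.mem_univ 1)) i (Finset.mem_univ i)
    simp only [map_one, Module.End.one_apply] at h0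
    have : (Module.finBasis ℂ W).repr x = 0 := Finsupp.ext h0
    simpa using congrArg ((Module.finBasis ℂ W).repr.symm) this

lemma innerAux_invariant (ρ : Representation ℂ G W) (h : G) (x y : W) :
    innerAux ρ (ρ h x) (ρ h y) = innerAux ρ x y := by
  unfold innerAux
  refine Fintype.sum_equiv (Equiv.mulRight h) _ _ fun g => ?_
  have hxx : ρ g (ρ h x) = ρ (g * h) x := by rw [map_mul]; rfl
  have hyy : ρ g (ρ h y) = ρ (g * h) y := by rw [map_mul]; rfl
  rw [hxx, hyy]
  rfl

lemma exists_fixed (ρ : Representation ℂ G W) (S : Finset G)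
    (hgen : Subgroup.closure (S : Set G) = ⊤) {μ : ℝ} (hcard : (S.card : ℝ) ≤ μ)
    (hspec : (μ : ℂ) ∈ spectrum ℂ (∑ s ∈ S, ρ s)) :
    ∃ v : W, v ≠ 0 ∧ ∀ g : G, ρ g v = v := by
  classical
  letI : NormedAddCommGroup W := (invCore ρ).toNormedAddCommGroup
  letI : InnerProductSpace ℂ W := InnerProductSpace.ofCore (invCore ρ).toCore
  have hinner : ∀ x y : W, (inner ℂ x y : ℂ) = innerAux ρ x y := fun x y => rfl
  have hnorm : ∀ (h : G) (x : W), ‖ρ h x‖ = ‖x‖ := by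
    intro h x
    rw [@norm_eq_sqrt_re_inner ℂ, @norm_eq_sqrt_re_inner ℂ (x := x), hinner, hinner,
      innerAux_invariant]
  have hE : Module.End.HasEigenvalue (∑ s ∈ S, ρ s) (μ : ℂ) :=
    Module.End.hasEigenvalue_iff_mem_spectrum.2 hspec
  obtain ⟨v, hvmem, hv0⟩ := hE.exists_hasEigenvector
  have hAv : (∑ s ∈ S, ρ s) v = (μ : ℂ) • v :=
    Module.End.mem_eigenspace_iff.1 hvmem
  set F : G → ℝ := fun s => RCLike.re (inner (𝕜 := ℂ) (ρ s v) v) with hF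
  have hsum : ∑ s ∈ S, F s = μ * ‖v‖ ^ 2 := by
    have h1 : ∑ s ∈ S, (inner (𝕜 := ℂ) (ρ s v) v) = inner (𝕜 := ℂ) ((∑ s ∈ S, ρ s) v) v := by
      rw [LinearMap.sum_apply, sum_inner]
    have h2 : (inner (𝕜 := ℂ) ((∑ s ∈ S, ρ s) v) v) = (μ : ℂ) * (‖v‖ : ℂ) ^ 2 := by
      rw [hAv, inner_smul_left, inner_self_eq_norm_sq_to_K]
      simp [Complex.conj_ofReal]
    have h3 : RCLike.re (∑ s ∈ S, (inner (𝕜 := ℂ) (ρ s v) v)) = ∑ s ∈ S, F s := by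
      rw [map_sum]
    rw [← h3, h1, h2, ← Complex.ofReal_pow, ← Complex.ofReal_mul, RCLike.re_to_complex,
      Complex.ofReal_re]
  have hle : ∀ s ∈ S, F s ≤ ‖v‖ ^ 2 := by
    intro s _
    calc F s ≤ ‖ρ s v‖ * ‖v‖ := re_inner_le_norm _ _
    _ = ‖v‖ ^ 2 := by rw [hnorm]; ring
  have hge : ∀ s ∈ S, ‖v‖ ^ 2 ≤ F s := by
    intro s hs
    have hcard1 : 1 ≤ S.card := Finset.card_pos.2 ⟨s, hs⟩
    have herase : ∑ t ∈ S.erase s, F t ≤ ((S.card : ℝ) - 1) * ‖v‖ ^ 2 := by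
      have := Finset.sum_le_card_nsmul (S.erase s) F (‖v‖ ^ 2)
        (fun t ht => hle t (Finset.mem_of_mem_erase ht))
      rw [Finset.card_erase_of_mem hs, nsmul_eq_mul] at this
      calc ∑ t ∈ S.erase s, F t ≤ ((S.card - 1 : ℕ) : ℝ) * ‖v‖ ^ 2 := this
      _ = ((S.card : ℝ) - 1) * ‖v‖ ^ 2 := by
          rw [Nat.cast_sub hcard1]; norm_num
    have hsplit : F s + ∑ t ∈ S.erase s, F t = μ * ‖v‖ ^ 2 := by
      rw [Finset.add_sum_erase S F hs, hsum]
    have hmul : (S.card : ℝ) * ‖v‖ ^ 2 ≤ μ * ‖v‖ ^ 2 :=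
      mul_le_mul_of_nonneg_right hcard (sq_nonneg _)
    linarith
  have hfix : ∀ s ∈ S, ρ s v = v := by
    intro s hs
    have heq : F s = ‖v‖ ^ 2 := le_antisymm (hle s hs) (hge s hs)
    have h1 : ‖ρ s v - v‖ ^ 2 = 0 := by
      have hFs : RCLike.re (inner (𝕜 := ℂ) (ρ s v) v) = F s := rfl
      rw [@norm_sub_sq ℂ, hnorm, hFs, heq]; ring
    have := pow_eq_zero_iff (n := 2) (by norm_num) |>.1 h1
    rwa [norm_eq_zero, sub_eq_zero] at this
  let stab : Subgroup G :=
    { carrier := {g : G | ρ g v = v}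
      one_mem' := by simp [Set.mem_setOf_eq, map_one]
      mul_mem' := by
        intro a b ha hb
        simp only [Set.mem_setOf_eq] at *
        rw [map_mul]
        change ρ a (ρ b v) = v
        rw [hb, ha]
      inv_mem' := by
        intro a ha
        simp only [Set.mem_setOf_eq] at *
        conv_lhs => rw [← ha]
        change (ρ a⁻¹ * ρ a) v = v
        rw [← map_mul, inv_mul_cancel, map_one, Module.End.one_apply] }
  have hclos : Subgroup.closure (S : Set G) ≤ stab :=
    (Subgroup.closure_le stab).2 fun s hs => hfix s hs
  rw [hgen] at hclos
  exact ⟨v, hv0, fun g => hclos (Subgroup.mem_top g)⟩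

end Forward

end Stmt0Aux


namespace Stmt0Aux2

variable {G : Type} [Group G] [Fintype G]

open MonoidAlgebra Finsupp

noncomputable def uElt (G : Type) [Group G] [Fintype G] : MonoidAlgebra ℂ G :=
  ∑ g : G, MonoidAlgebra.single g 1

noncomputable def wElt (H : Subgroup G) : MonoidAlgebra ℂ G :=
  ∑ h ∈ Finset.univ.filter (· ∈ H), MonoidAlgebra.single h 1

lemma single_mul_uElt (g : G) : MonoidAlgebra.single g (1 : ℂ) * uElt G = uElt G := by
  unfold uElt
  rw [Finset.mul_sum]
  refine Fintype.sum_equiv (Equiv.mulLeft g) _ _ fun x => ?_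
  rw [MonoidAlgebra.single_mul_single, one_mul]
  rfl

lemma mul_uElt (a : MonoidAlgebra ℂ G) : a * uElt G = (∑ x : G, a.coeff x) • uElt G := by
  induction a using MonoidAlgebra.induction_linear with
  | zero => simp
  | add f g hf hg =>
      rw [add_mul, hf, hg, ← add_smul]
      congr 1
      rw [← Finset.sum_add_distrib]
      rfl
  | single g c =>
      show MonoidAlgebra.single g c * uElt G = (∑ x : G, (MonoidAlgebra.single g c).coeff x) • uElt G
      have h1 : (MonoidAlgebra.single g c : MonoidAlgebra ℂ G) = c • MonoidAlgebra.single g 1 := by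
        rw [MonoidAlgebra.smul_single', mul_one]
      rw [h1, smul_mul_assoc, single_mul_uElt]
      congr 1
      simp [MonoidAlgebra.coeff_single, Finsupp.single_apply, Finset.sum_ite_eq,
        Finset.sum_ite_eq']
lemma single_mul_wElt {H : Subgroup G} {s : G} (hs : s ∈ H) :
    MonoidAlgebra.single s (1 : ℂ) * wElt H = wElt H := by
  unfold wElt
  rw [Finset.mul_sum]
  simp only [MonoidAlgebra.single_mul_single, one_mul]
  refine Finset.sum_bij' (fun h _ => s * h) (fun h _ => s⁻¹ * h) ?_ ?_ ?_ ?_ ?_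
  · intro h hh
    simp only [Finset.mem_filter, Finset.mem_univ, true_and] at hh ⊢
    exact H.mul_mem hs hh
  · intro h hh
    simp only [Finset.mem_filter, Finset.mem_univ, true_and] at hh ⊢
    exact H.mul_mem (H.inv_mem hs) hh
  · intro h _; group
  · intro h _; group
  · intro h _; rfl

lemma uElt_mul_wElt (H : Subgroup G) :
    uElt G * wElt H = (((Finset.univ.filter (· ∈ H)).card : ℂ)) • uElt G := by
  unfold uElt wElt
  rw [Finset.sum_mul]
  have h1 : ∀ g : G, MonoidAlgebra.single g (1:ℂ) * (∑ h ∈ Finset.univ.filter (· ∈ H), MonoidAlgebra.single h 1)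
      = ∑ h ∈ Finset.univ.filter (· ∈ H), MonoidAlgebra.single (g * h) (1:ℂ) := by
    intro g
    rw [Finset.mul_sum]
    simp [MonoidAlgebra.single_mul_single]
  calc ∑ g : G, MonoidAlgebra.single g (1:ℂ) * (∑ h ∈ Finset.univ.filter (· ∈ H), MonoidAlgebra.single h 1)
      = ∑ g : G, ∑ h ∈ Finset.univ.filter (· ∈ H), MonoidAlgebra.single (g * h) (1:ℂ) := by
        exact Finset.sum_congr rfl fun g _ => h1 g
    _ = ∑ h ∈ Finset.univ.filter (· ∈ H), ∑ g : G, MonoidAlgebra.single (g * h) (1:ℂ) :=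
        Finset.sum_comm
    _ = ∑ _h ∈ Finset.univ.filter (· ∈ H), ∑ g : G, MonoidAlgebra.single g (1:ℂ) := by
        refine Finset.sum_congr rfl fun h _ => ?_
        exact Fintype.sum_equiv (Equiv.mulRight h) _ _ fun g => rfl
    _ = (((Finset.univ.filter (· ∈ H)).card : ℂ)) • ∑ g : G, MonoidAlgebra.single g (1:ℂ) := by
        rw [Finset.sum_const]
        exact (Nat.cast_smul_eq_nsmul ℂ _ _).symm

lemma wElt_not_mem_span (H : Subgroup G) (hH : H ≠ ⊤) :
    wElt H ∉ Submodule.span (MonoidAlgebra ℂ G) {uElt G} := by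
  intro hmem
  rw [Submodule.mem_span_singleton] at hmem
  obtain ⟨a, ha⟩ := hmem
  rw [smul_eq_mul, mul_uElt] at ha
  set c : ℂ := ∑ x : G, a.coeff x
  obtain ⟨g₀, hg₀⟩ : ∃ g₀ : G, g₀ ∉ H := by
    by_contra h
    push_neg at h
    exact hH (Subgroup.eq_top_iff' H |>.2 h)
  have hu : ∀ g : G, (uElt G).coeff g = 1 := by
    intro g
    unfold uElt
    rw [MonoidAlgebra.coeff_sum, Finsupp.finset_sum_apply]
    simp only [MonoidAlgebra.coeff_single, Finsupp.single_apply]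
    rw [Finset.sum_ite_eq' Finset.univ g (fun _ => (1:ℂ))]
    simp
  have hw : ∀ g : G, (wElt H).coeff g = if g ∈ H then 1 else 0 := by
    intro g
    unfold wElt
    rw [MonoidAlgebra.coeff_sum, Finsupp.finset_sum_apply]
    simp only [MonoidAlgebra.coeff_single, Finsupp.single_apply]
    rw [Finset.sum_ite_eq' (Finset.univ.filter (· ∈ H)) g (fun _ => (1:ℂ))]
    simp
  have h1 : (wElt H).coeff 1 = 1 := by rw [hw]; simp [H.one_mem]
  have h2 : (wElt H).coeff g₀ = 0 := by rw [hw]; simp [hg₀]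
  have e1 : (c • uElt G).coeff 1 = c := by rw [MonoidAlgebra.coeff_smul, Finsupp.smul_apply, hu, smul_eq_mul, mul_one]
  have e2 : (c • uElt G).coeff g₀ = c := by rw [MonoidAlgebra.coeff_smul, Finsupp.smul_apply, hu, smul_eq_mul, mul_one]
  rw [ha] at e1 e2
  rw [h1] at e1
  rw [h2] at e2
  exact one_ne_zero (e1.trans e2.symm)

end Stmt0Aux2


namespace Stmt0Aux3

variable {G : Type} [Group G] [Fintype G]

variable (M : Type) [AddCommGroup M] [Module ℂ M] [Module (MonoidAlgebra ℂ G) M]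
  [IsScalarTower ℂ (MonoidAlgebra ℂ G) M] [FiniteDimensional ℂ M]

lemma ofModule'_apply (g : G) (m : M) :
    Representation.ofModule' (k := ℂ) (G := G) M g m = (MonoidAlgebra.single g (1:ℂ)) • m := by
  simp [Representation.ofModule', MonoidAlgebra.lift_symm_apply, MonoidAlgebra.of_apply]

end Stmt0Aux3

namespace Stmt0Aux3

set_option linter.unusedSectionVars false

variable {G : Type} [Group G] [Fintype G]
variable (M : Type) [AddCommGroup M] [Module ℂ M] [Module (MonoidAlgebra ℂ G) M]
  [IsScalarTower ℂ (MonoidAlgebra ℂ G) M] [FiniteDimensional ℂ M]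

/-- Promote a `ℂ`-subspace invariant under all `single g 1 • ·` to a `MonoidAlgebra`-submodule. -/
def promote (p : Submodule ℂ M)
    (hp : ∀ (g : G), ∀ m ∈ p, (MonoidAlgebra.single g (1:ℂ)) • m ∈ p) :
    Submodule (MonoidAlgebra ℂ G) M where
  carrier := (p : Set M)
  add_mem' := p.add_mem
  zero_mem' := p.zero_mem
  smul_mem' := by
    intro a m hm
    induction a using MonoidAlgebra.induction_linear with
    | zero => simpa using p.zero_mem
    | add f g hf hg => rw [add_smul]; exact p.add_mem hf hg
    | single g c =>
        show (MonoidAlgebra.single g c : MonoidAlgebra ℂ G) • m ∈ p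
        have h2 : (MonoidAlgebra.single g c : MonoidAlgebra ℂ G) = c • MonoidAlgebra.single g 1 := by
          rw [MonoidAlgebra.smul_single', mul_one]
        rw [h2, smul_assoc]
        exact p.smul_mem c (hp g m hm)

variable {M}

lemma simple_of_isSimpleModule [IsSimpleModule (MonoidAlgebra ℂ G) M] :
    Simple (FDRep.of (Representation.ofModule' (k := ℂ) (G := G) M)) := by
  let X : FDRep ℂ G := FDRep.of (Representation.ofModule' (k := ℂ) (G := G) M)
  show Simple X
  constructor
  intro Y f hMono
  have hcomm : ∀ (g : G) (y : Y.V), f.hom (Y.ρ g y) = X.ρ g (f.hom y) := by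
    intro g y
    have := congrArg (fun (φ : Y.V ⟶ X.V) => φ y) (f.comm g)
    exact this
  have hXρ : ∀ (g : G) (m : M), X.ρ g m = (MonoidAlgebra.single g (1:ℂ)) • m := by
    intro g m
    exact ofModule'_apply M g m
  constructor
  · -- IsIso f → f ≠ 0
    intro hIso hf0
    haveI : Nontrivial M := IsSimpleModule.nontrivial (MonoidAlgebra ℂ G) M
    obtain ⟨m, hm⟩ := exists_ne (0 : M)
    have hfh : f.hom = 0 := by rw [hf0]; rfl
    have hm2 : m = f.hom ((inv f).hom m) := by
      have h3 := congrArg (fun (φ : X ⟶ X) => φ.hom m) (IsIso.inv_hom_id f).symm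
      simp only [Action.id_hom, Action.comp_hom] at h3
      exact h3
    rw [hfh] at hm2
    exact hm hm2
  · -- f ≠ 0 → IsIso f
    intro hf0
    have hfhom0 : (ConcreteCategory.hom f.hom : Y.V →ₗ[ℂ] M) ≠ 0 := by
      intro h
      apply hf0
      ext1
      apply FGModuleCat.hom_ext
      exact h
    -- injectivity
    have hinj : Function.Injective f.hom := by
      rw [← LinearMap.ker_eq_bot]
      by_contra hker
      set K : Submodule ℂ Y.V := LinearMap.ker (ConcreteCategory.hom f.hom : Y.V →ₗ[ℂ] M) with hK
      have hKinv : ∀ (g : G), ∀ y ∈ K, Y.ρ g y ∈ K := by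
        intro g y hy
        rw [LinearMap.mem_ker] at hy ⊢
        change f.hom (Y.ρ g y) = 0
        rw [hcomm, hy, map_zero]
      let ρK : Representation ℂ G K :=
        { toFun := fun g => (Y.ρ g).restrict (fun y hy => hKinv g y hy)
          map_one' := by ext y; simp [LinearMap.restrict_apply]
          map_mul' := by
            intro a b
            ext y
            simp only [LinearMap.restrict_apply, Module.End.mul_apply, map_mul] }
      let Z : FDRep ℂ G := FDRep.of ρK
      let ι : Z ⟶ Y :=
        { hom := (ConcreteCategory.ofHom (K.subtype : K →ₗ[ℂ] Y.V) : Z.V ⟶ Y.V)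
          comm := fun g => by
            ext y
            rfl }
      have hι : ι ≫ f = 0 := by
        ext y
        change f.hom (K.subtype y) = 0
        exact y.2
      have hι0 : ι = 0 := by
        haveI := hMono
        exact Limits.zero_of_comp_mono f hι
      apply hker
      ext y
      simp only [Submodule.mem_bot]
      constructor
      · intro hy
        have := congrArg (fun (φ : Z ⟶ Y) => φ.hom ⟨y, hy⟩) hι0
        exact this
      · intro hy; rw [hy]; exact K.zero_mem
    -- surjectivity
    have hsurj : Function.Surjective f.hom := by
      set R : Submodule ℂ M := LinearMap.range (ConcreteCategory.hom f.hom : Y.V →ₗ[ℂ] M) with hR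
      have hRinv : ∀ (g : G), ∀ m ∈ R, (MonoidAlgebra.single g (1:ℂ)) • m ∈ R := by
        rintro g m ⟨y, rfl⟩
        exact ⟨Y.ρ g y, (hcomm g y).trans (hXρ g (f.hom y))⟩
      set R' : Submodule (MonoidAlgebra ℂ G) M := promote M R hRinv with hR'
      have hR'bot : R' ≠ ⊥ := by
        intro h
        apply hfhom0
        ext y
        have : f.hom y ∈ R' := ⟨y, rfl⟩
        rw [h] at this
        simpa using this
      have hR'top : R' = ⊤ := (eq_bot_or_eq_top R').resolve_left hR'bot
      intro m
      have : m ∈ R' := by rw [hR'top]; trivial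
      exact this
    -- build the inverse
    let e : Y.V ≃ₗ[ℂ] M := LinearEquiv.ofBijective (ConcreteCategory.hom f.hom : Y.V →ₗ[ℂ] M) ⟨hinj, hsurj⟩
    have he : ∀ z : Y.V, e z = f.hom z := fun z => rfl
    have hes : ∀ m : M, f.hom (e.symm m) = m := by
      intro m
      rw [← he]
      exact e.apply_symm_apply m
    let finv : X ⟶ Y :=
      { hom := (ConcreteCategory.ofHom (e.symm.toLinearMap : M →ₗ[ℂ] Y.V) : X.V ⟶ Y.V)
        comm := fun g => by
          ext m
          change e.symm (X.ρ g m) = Y.ρ g (e.symm m)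
          apply hinj
          rw [hes, hcomm, hes]
      }
    refine ⟨⟨finv, ?_, ?_⟩⟩
    · ext y
      change e.symm (f.hom y) = y
      rw [← he]
      exact e.symm_apply_apply y
    · ext m
      change f.hom (e.symm m) = m
      exact hes m

end Stmt0Aux3

open Stmt0Aux Stmt0Aux2 Stmt0Aux3

/-- A symmetric subset `S` of a finite group `G` generates `G` iff for every nontrivial
irreducible complex representation `ρ` of `G`, every (real) eigenvalue of
`A_ρ(S) = ∑_{s ∈ S} ρ(s)` is strictly less than `|S|`. -/
theorem stmt_0 {G : Type} [Group G] [Fintype G] (S : Finset G)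
    (hsym : ∀ x ∈ S, x⁻¹ ∈ S) :
    Subgroup.closure (S : Set G) = ⊤ ↔
      ∀ V : FDRep ℂ G, Simple V → (∃ g : G, V.ρ g ≠ 1) →
        ∀ μ : ℝ, (μ : ℂ) ∈ spectrum ℂ (∑ s ∈ S, V.ρ s) → μ < (S.card : ℝ) := by
  classical
  constructor
  · -- generation implies spectral gap
    intro hgen V hSimp hnt μ hspec
    by_contra hlt
    push_neg at hlt
    obtain ⟨v, hv0, hfix⟩ := exists_fixed (W := V) V.ρ S hgen hlt hspec
    haveI := hSimp
    let T : FDRep ℂ G := FDRep.of (Representation.trivial ℂ (G := G) (V := ℂ))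
    let f : T ⟶ V :=
      { hom := (ConcreteCategory.ofHom (LinearMap.toSpanSingleton ℂ _ v : ℂ →ₗ[ℂ] V) : T.V ⟶ V.V)
        comm := fun g => by
          apply FGModuleCat.hom_ext
          apply LinearMap.ext
          intro c
          show (LinearMap.toSpanSingleton ℂ _ v) c = V.ρ g ((LinearMap.toSpanSingleton ℂ _ v) c)
          rw [LinearMap.toSpanSingleton_apply, map_smul, hfix g]
      }
    haveI hMono : Mono f := by
      apply CategoryTheory.Preadditive.mono_of_cancel_zero
      intro Z g hg
      ext z
      have := congrArg (fun (φ : Z ⟶ V) => φ.hom z) hg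
      simp only [Action.comp_hom, Action.zero_hom] at this
      have h2 : f.hom (g.hom z) = 0 := this
      have h3 : (g.hom z : ℂ) • v = 0 := h2
      rcases smul_eq_zero.1 h3 with h | h
      · exact h
      · exact absurd h hv0
    have hf0 : f ≠ 0 := by
      intro h
      apply hv0
      have := congrArg (fun (φ : T ⟶ V) => φ.hom (1 : ℂ)) h
      simp only [Action.zero_hom] at this
      have h1 : f.hom (1 : ℂ) = v := by
        show (LinearMap.toSpanSingleton ℂ _ v) (1 : ℂ) = v
        simp
      rw [← h1]
      exact this
    haveI : IsIso f := isIso_of_mono_of_nonzero hf0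
    obtain ⟨g₀, hg₀⟩ := hnt
    apply hg₀
    ext x
    have hfc : f.hom ((inv f).hom x) = x := by
      have := congrArg (fun (φ : V ⟶ V) => φ.hom x) (IsIso.inv_hom_id f)
      exact this
    have hcm : f.hom (T.ρ g₀ ((inv f).hom x)) = V.ρ g₀ (f.hom ((inv f).hom x)) := by
      have := congrArg (fun (φ : T.V ⟶ V.V) => φ ((inv f).hom x)) (f.comm g₀)
      exact this
    have hT : T.ρ g₀ ((inv f).hom x) = (inv f).hom x := rfl
    rw [hT, hfc] at hcm
    rw [Module.End.one_apply, ← hcm]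
  · -- spectral gap implies generation
    intro hRHS
    by_contra hne
    set H := Subgroup.closure (S : Set G) with hHdef
    haveI : NeZero ((Fintype.card G : ℂ)) := ⟨Nat.cast_ne_zero.2 Fintype.card_ne_zero⟩
    haveI : Module.Finite ℂ (MonoidAlgebra ℂ G) :=
      inferInstance
    set I : Submodule (MonoidAlgebra ℂ G) (MonoidAlgebra ℂ G) :=
      Submodule.span (MonoidAlgebra ℂ G) {uElt G} with hIdef
    have hxI : wElt H ∉ I := wElt_not_mem_span H hne
    have hx0 : (Submodule.Quotient.mk (wElt H) : (MonoidAlgebra ℂ G) ⧸ I) ≠ 0 := by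
      intro h
      exact hxI ((Submodule.Quotient.mk_eq_zero I).1 h)
    set x : (MonoidAlgebra ℂ G) ⧸ I := Submodule.Quotient.mk (wElt H) with hxdef
    -- find a coatom avoiding x
    have hP0 : Submodule.span (MonoidAlgebra ℂ G) {x} ≠ ⊥ := by
      intro hbot
      apply hx0
      have hxmem : x ∈ Submodule.span (MonoidAlgebra ℂ G) {x} :=
        Submodule.mem_span_singleton_self x
      rw [hbot] at hxmem
      simpa using hxmem
    obtain ⟨N₀, hN₀⟩ := exists_isCompl (Submodule.span (MonoidAlgebra ℂ G) {x})
    have hN₀top : N₀ ≠ ⊤ := by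
      intro h
      apply hP0
      have := hN₀.inf_eq_bot
      rw [h, inf_top_eq] at this
      exact this
    obtain ⟨N, hNco, hN₀N⟩ := (eq_top_or_exists_le_coatom N₀).resolve_left hN₀top
    have hxN : x ∉ N := by
      intro hx
      apply hNco.1
      rw [eq_top_iff, ← hN₀.sup_eq_top]
      exact sup_le ((Submodule.span_le).2 (Set.singleton_subset_iff.2 hx)) hN₀N
    haveI hSimpleMod : IsSimpleModule (MonoidAlgebra ℂ G) (((MonoidAlgebra ℂ G) ⧸ I) ⧸ N) :=
      isSimpleModule_iff_isCoatom.2 hNco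
    set y : ((MonoidAlgebra ℂ G) ⧸ I) ⧸ N := Submodule.Quotient.mk x with hydef
    have hy0 : y ≠ 0 := by
      intro h
      exact hxN ((Submodule.Quotient.mk_eq_zero N).1 h)
    -- finite dimensionality
    haveI : Module.Finite ℂ ((MonoidAlgebra ℂ G) ⧸ I) :=
      Module.Finite.of_surjective ((I.mkQ).restrictScalars ℂ) (Submodule.mkQ_surjective I)
    haveI : Module.Finite ℂ (((MonoidAlgebra ℂ G) ⧸ I) ⧸ N) :=
      Module.Finite.of_surjective ((N.mkQ).restrictScalars ℂ) (Submodule.mkQ_surjective N)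
    set V : FDRep ℂ G :=
      FDRep.of (Representation.ofModule' (k := ℂ) (G := G) (((MonoidAlgebra ℂ G) ⧸ I) ⧸ N))
      with hVdef
    have hρ : ∀ (g : G) (m : ((MonoidAlgebra ℂ G) ⧸ I) ⧸ N),
        V.ρ g m = (MonoidAlgebra.single g (1:ℂ)) • m := fun g m =>
      ofModule'_apply _ g m
    -- S-fixedness of y
    have hfix : ∀ s ∈ S, (MonoidAlgebra.single s (1:ℂ)) • y = y := by
      intro s hs
      have hsH : s ∈ H := Subgroup.subset_closure hs
      have h1 : (MonoidAlgebra.single s (1:ℂ)) • x = x := by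
        rw [hxdef, ← Submodule.Quotient.mk_smul]
        congr 1
        rw [smul_eq_mul]
        exact single_mul_wElt hsH
      rw [hydef, ← Submodule.Quotient.mk_smul, h1]
    -- eigenvalue |S|
    have hAy : (∑ s ∈ S, V.ρ s) y = ((S.card : ℂ)) • y := by
      rw [LinearMap.sum_apply]
      have : ∀ s ∈ S, V.ρ s y = y := fun s hs => by rw [hρ, hfix s hs]
      rw [Finset.sum_congr rfl this, Finset.sum_const, Nat.cast_smul_eq_nsmul]
    have hEig : Module.End.HasEigenvalue (∑ s ∈ S, V.ρ s) ((S.card : ℂ)) :=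
      Module.End.hasEigenvalue_of_hasEigenvector
        ⟨Module.End.mem_eigenspace_iff.2 hAy, hy0⟩
    have hspec : (((S.card : ℝ) : ℂ)) ∈ spectrum ℂ (∑ s ∈ S, V.ρ s) := by
      have hcast : (((S.card : ℝ)) : ℂ) = ((S.card : ℂ)) := by push_cast; rfl
      rw [hcast]
      exact hEig.mem_spectrum
    -- nontriviality
    have hnt : ∃ g : G, V.ρ g ≠ 1 := by
      by_contra h
      push_neg at h
      have hall : ∀ (g : G) (m : ((MonoidAlgebra ℂ G) ⧸ I) ⧸ N),
          (MonoidAlgebra.single g (1:ℂ)) • m = m := by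
        intro g m
        rw [← hρ, h g, Module.End.one_apply]
      have h1 : (uElt G) • y = (Fintype.card G : ℕ) • y := by
        rw [show uElt G = ∑ g : G, MonoidAlgebra.single g (1:ℂ) from rfl, Finset.sum_smul]
        rw [Finset.sum_congr rfl fun g _ => hall g y, Finset.sum_const, Finset.card_univ]
      have h2 : (uElt G) • y = 0 := by
        have hx2 : (uElt G) • x = Submodule.Quotient.mk ((uElt G) * wElt H) := by
          rw [hxdef, ← Submodule.Quotient.mk_smul, smul_eq_mul]
        have hx3 : (uElt G) • x = 0 := by
          rw [hx2, uElt_mul_wElt, Submodule.Quotient.mk_eq_zero]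
          exact Submodule.smul_of_tower_mem I _ (Submodule.mem_span_singleton_self _)
        rw [hydef, ← Submodule.Quotient.mk_smul, hx3, Submodule.Quotient.mk_zero]
      rw [h2, ← Nat.cast_smul_eq_nsmul ℂ] at h1
      have : y = 0 := by
        rcases smul_eq_zero.1 h1.symm with hc | hy
        · exact absurd hc (NeZero.ne _)
        · exact hy
      exact hy0 this
    have := hRHS V (simple_of_isSimpleModule) hnt (S.card : ℝ) hspec
    exact lt_irrefl _ this
end

section
/- Let n ≥ 25 with n = q + 1 for a prime power q = q₀^ℓ (q₀ prime), and suppose a subgroup of PΓL(2, q) acts transitively on the set of 4-element subsets of P¹(F_q). Then binom(q+1, 4) divides ℓ·(q³ − q), which forces (q − 2) | 24ℓ; for q ≥ 24 the only solution is q = 32. -/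
open scoped MatrixGroups Classical

open scoped Pointwise

namespace Stmt19

set_option linter.unusedSectionVars false

variable {F : Type} [Field F] [Fintype F]

/-- The action of field automorphisms on `GL (Fin 2) F` by mapping entries. -/
def autHom : (F ≃+* F) →* MulAut (GL (Fin 2) F) where
  toFun σ := Units.mapEquiv (RingEquiv.mapMatrix σ).toMulEquiv
  map_one' := by
    ext u i j
    simp [Units.mapEquiv]
  map_mul' σ τ := by
    ext u i j
    simp [Units.mapEquiv, Matrix.map_map]

/-- The semilinear group `GL(2,F) ⋊ Aut(F)`. -/
abbrev Gam (F : Type) [Field F] [Fintype F] :=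
  SemidirectProduct (GL (Fin 2) F) (F ≃+* F) autHom

/-- The semilinear map attached to `g : Gam F`. -/
def sl (g : Gam F) : (Fin 2 → F) →ₛₗ[(g.right : F →+* F)] (Fin 2 → F) where
  toFun v := ((g.left : GL (Fin 2) F) : Matrix (Fin 2) (Fin 2) F).mulVec (fun i => g.right (v i))
  map_add' v w := by
    show ((g.left : GL (Fin 2) F) : Matrix (Fin 2) (Fin 2) F).mulVec
      (fun i => g.right ((v + w) i)) = _
    have h : (fun i => g.right ((v + w) i))
        = ((fun i => g.right (v i)) + fun i => g.right (w i)) := by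
      funext i; simp
    rw [h, Matrix.mulVec_add]
  map_smul' c v := by
    show ((g.left : GL (Fin 2) F) : Matrix (Fin 2) (Fin 2) F).mulVec
      (fun i => g.right ((c • v) i)) = _
    have h : (fun i => g.right ((c • v) i)) = g.right c • fun i => g.right (v i) := by
      funext i; simp
    rw [h, Matrix.mulVec_smul]; rfl

lemma sl_apply (g : Gam F) (v : Fin 2 → F) :
    sl g v = ((g.left : GL (Fin 2) F) : Matrix (Fin 2) (Fin 2) F).mulVec
      (fun i => g.right (v i)) := rfl

lemma sl_injective (g : Gam F) : Function.Injective (sl g) := by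
  intro v w h
  have key : ∀ u : Fin 2 → F,
      ((g.left⁻¹ : GL (Fin 2) F) : Matrix (Fin 2) (Fin 2) F).mulVec
        (((g.left : GL (Fin 2) F) : Matrix (Fin 2) (Fin 2) F).mulVec u) = u := by
    intro u
    rw [Matrix.mulVec_mulVec, ← Units.val_mul, inv_mul_cancel, Units.val_one,
      Matrix.one_mulVec]
  have h2 := congrArg (((g.left⁻¹ : GL (Fin 2) F) :
    Matrix (Fin 2) (Fin 2) F).mulVec ·) h
  simp only [sl_apply, key] at h2
  funext i
  have := congrFun h2 i
  exact g.right.injective this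

lemma map_mulVec_aut (σ : F ≃+* F) (B : Matrix (Fin 2) (Fin 2) F) (w : Fin 2 → F) :
    (fun i => σ (B.mulVec w i)) = (B.map σ).mulVec (fun i => σ (w i)) := by
  funext i
  simp [Matrix.mulVec, dotProduct, map_sum, Matrix.map_apply]

lemma mk_eq_of_eq {K V : Type*} [DivisionRing K] [AddCommGroup V] [Module K V]
    {v w : V} (hv : v ≠ 0) (hw : w ≠ 0) (h : v = w) :
    Projectivization.mk K v hv = Projectivization.mk K w hw := by subst h; rfl

lemma sl_ne_zero (g : Gam F) {v : Fin 2 → F} (hv : v ≠ 0) : sl g v ≠ 0 := by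
  intro h
  exact hv (sl_injective g (h.trans (map_zero (sl g)).symm))

instance : SMul (Gam F) (Projectivization F (Fin 2 → F)) :=
  ⟨fun g x => Projectivization.map (sl g) (sl_injective g) x⟩

lemma smul_mk (g : Gam F) (v : Fin 2 → F) (hv : v ≠ 0) :
    g • Projectivization.mk F v hv
      = Projectivization.mk F (sl g v) (sl_ne_zero g hv) :=
  Projectivization.map_mk (sl g) (sl_injective g) v hv

instance : MulAction (Gam F) (Projectivization F (Fin 2 → F)) where
  one_smul x := by
    induction x using Projectivization.ind with
    | h v hv =>
      rw [smul_mk]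
      apply mk_eq_of_eq
      rw [sl_apply]
      have h1 : (((1 : Gam F).left : GL (Fin 2) F) : Matrix (Fin 2) (Fin 2) F) = 1 := rfl
      rw [h1, Matrix.one_mulVec]
      funext i
      rfl
  mul_smul g h x := by
    induction x using Projectivization.ind with
    | h v hv =>
      rw [smul_mk, smul_mk, smul_mk]
      apply mk_eq_of_eq
      rw [sl_apply, sl_apply, sl_apply]
      rw [SemidirectProduct.mul_left, SemidirectProduct.mul_right]
      rw [Units.val_mul, ← Matrix.mulVec_mulVec]
      congr 1
      have hA : ((autHom (F := F) g.right h.left : GL (Fin 2) F) :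
          Matrix (Fin 2) (Fin 2) F)
          = ((h.left : GL (Fin 2) F) : Matrix (Fin 2) (Fin 2) F).map g.right := rfl
      rw [hA, map_mulVec_aut]
      rfl

/-- The homomorphism from the semilinear group to permutations of the projective line. -/
def Phi (F : Type) [Field F] [Fintype F] :
    Gam F →* Equiv.Perm (Projectivization F (Fin 2 → F)) :=
  MulAction.toPermHom (Gam F) (Projectivization F (Fin 2 → F))

lemma Phi_apply_mk (g : Gam F) (v : Fin 2 → F) (hv : v ≠ 0) :
    Phi F g (Projectivization.mk F v hv)
      = Projectivization.mk F (sl g v) (sl_ne_zero g hv) :=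
  smul_mk g v hv

/-- Scalar matrices inside `Gam`. -/
def scalarHom (F : Type) [Field F] [Fintype F] : Fˣ →* Gam F :=
  SemidirectProduct.inl.comp
    (Units.map (algebraMap F (Matrix (Fin 2) (Fin 2) F)).toMonoidHom)

lemma scalarHom_injective : Function.Injective (scalarHom F) :=
  SemidirectProduct.inl_injective.comp
    (Units.map_injective (f := (algebraMap F (Matrix (Fin 2) (Fin 2) F)).toMonoidHom)
      (RingHom.injective _))

lemma scalarHom_mem_ker (c : Fˣ) : scalarHom F c ∈ (Phi F).ker := by
  rw [MonoidHom.mem_ker]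
  ext x
  induction x using Projectivization.ind with
  | h v hv =>
    show Phi F (scalarHom F c) (Projectivization.mk F v hv) = Projectivization.mk F v hv
    rw [Phi_apply_mk, Projectivization.mk_eq_mk_iff]
    refine ⟨c, ?_⟩
    rw [sl_apply]
    have h1 : (((scalarHom F c).left : GL (Fin 2) F) : Matrix (Fin 2) (Fin 2) F)
        = algebraMap F (Matrix (Fin 2) (Fin 2) F) (c : F) := rfl
    rw [h1, Algebra.algebraMap_eq_smul_one, Matrix.smul_mulVec, Matrix.one_mulVec]
    rfl

lemma card_Gam : Nat.card (Gam F) = Nat.card (GL (Fin 2) F) * Nat.card (F ≃+* F) := by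
  have e : Gam F ≃ (GL (Fin 2) F) × (F ≃+* F) :=
    ⟨fun g => (g.left, g.right), fun p => ⟨p.1, p.2⟩, fun _ => rfl, fun _ => rfl⟩
  rw [Nat.card_congr e, Nat.card_prod]

lemma card_proj : Nat.card (Projectivization F (Fin 2 → F)) = Fintype.card F + 1 := by
  have f : (Fin 2 → F) ≃ₗ[F] F × F := LinearEquiv.finTwoArrow F F
  have e1 : Projectivization F (Fin 2 → F) ≃ Projectivization F (F × F) := by
    refine ⟨Projectivization.map f.toLinearMap f.injective,
      Projectivization.map f.symm.toLinearMap f.symm.injective, ?_, ?_⟩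
    · intro x
      induction x using Projectivization.ind with
      | h v hv =>
        rw [Projectivization.map_mk, Projectivization.map_mk]
        apply mk_eq_of_eq
        simp
    · intro x
      induction x using Projectivization.ind with
      | h v hv =>
        rw [Projectivization.map_mk, Projectivization.map_mk]
        apply mk_eq_of_eq
        simp
  have e2 : OnePoint F ≃ Projectivization F (F × F) := (OnePoint.equivProjectivization F).trans e1
  have e3 : OnePoint F ≃ Option F := Equiv.refl _
  rw [Nat.card_congr (e1.trans (e2.symm.trans e3))]
  simp [Nat.card_eq_fintype_card]

lemma card_ringAut (q₀ ℓ : ℕ) (hq₀ : q₀.Prime) (hcard : Fintype.card F = q₀ ^ ℓ) :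
    Nat.card (F ≃+* F) = ℓ := by
  have hl : ℓ ≠ 0 := by
    rintro rfl
    have h2 := Fintype.one_lt_card (α := F)
    rw [hcard] at h2
    simp at h2
  obtain ⟨p, hp⟩ := CharP.exists F
  haveI := hp
  have hpp : p.Prime := CharP.char_is_prime F p
  haveI : Fact p.Prime := ⟨hpp⟩
  obtain ⟨n, -, hn⟩ := FiniteField.card F p
  have hpq : p = q₀ := by
    have hd : p ∣ q₀ ^ ℓ := by
      rw [← hcard, hn]
      exact dvd_pow_self p n.ne_zero
    exact (Nat.prime_dvd_prime_iff_eq hpp hq₀).mp (hpp.dvd_of_dvd_pow hd)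
  subst hpq
  haveI : Algebra (ZMod p) F := ZMod.algebra F p
  haveI : Module.Finite (ZMod p) F := Module.Finite.of_finite
  have e : (F ≃ₐ[ZMod p] F) ≃ (F ≃+* F) :=
    { toFun := fun a => a.toRingEquiv
      invFun := fun σ => AlgEquiv.ofRingEquiv (f := σ) (fun x =>
        RingHom.congr_fun (Subsingleton.elim
          ((σ : F →+* F).comp (algebraMap (ZMod p) F)) (algebraMap (ZMod p) F)) x)
      left_inv := fun a => by ext x; rfl
      right_inv := fun σ => by ext x; rfl }
  rw [← Nat.card_congr e, IsGalois.card_aut_eq_finrank]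
  have hcard2 : Fintype.card F = p ^ Module.finrank (ZMod p) F := by
    have := Module.card_eq_pow_finrank (K := ZMod p) (V := F)
    rwa [ZMod.card] at this
  apply Nat.pow_right_injective hq₀.two_le
  show p ^ Module.finrank (ZMod p) F = p ^ ℓ
  rw [← hcard2, ← hcard]

lemma pow_gt (n : ℕ) (hn : 8 ≤ n) : 24 * n + 2 < 2 ^ n := by
  induction n, hn using Nat.le_induction with
  | base => norm_num
  | succ n hn ih =>
    have h1 : 2 ^ (n + 1) = 2 * 2 ^ n := by ring
    omega

lemma arith (q₀ ℓ q : ℕ) (hq₀ : q₀.Prime) (hq : q = q₀ ^ ℓ) (hq24 : 24 ≤ q)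
    (h1 : (q + 1).choose 4 ∣ ℓ * (q ^ 3 - q)) :
    (q - 2) ∣ 24 * ℓ ∧ q = 32 := by
  obtain ⟨s, hs⟩ : ∃ s, q = s + 2 := ⟨q - 2, by omega⟩
  have d1 : q - 1 = s + 1 := by omega
  have d2 : q - 2 = s := by omega
  have e1 : q ^ 3 - q = (q + 1) * q * (q - 1) := by
    rw [d1]
    have h : q ^ 3 = (q + 1) * q * (s + 1) + q := by rw [hs]; ring
    omega
  have e2 : 24 * ((q + 1).choose 4) = ((q + 1) * q * (q - 1)) * (q - 2) := by
    have hdesc : (q + 1).descFactorial 4 = 24 * (q + 1).choose 4 := by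
      rw [Nat.descFactorial_eq_factorial_mul_choose]
      norm_num [Nat.factorial]
    have s1 : q + 1 - 1 = q := by omega
    have s2 : q + 1 - 2 = s + 1 := by omega
    have s3 : q + 1 - 3 = s := by omega
    have hdesc2 : (q + 1).descFactorial 4 = s * ((s + 1) * (q * ((q + 1) * 1))) := by
      simp [Nat.descFactorial, s1, s2, s3]
    rw [← hdesc, hdesc2, d1, d2]
    ring
  have h2 := Nat.mul_dvd_mul_left 24 h1
  rw [e2, e1] at h2
  have hr : 24 * (ℓ * ((q + 1) * q * (q - 1))) = ((q + 1) * q * (q - 1)) * (24 * ℓ) := by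
    ring
  rw [hr] at h2
  have hpos : 0 < (q + 1) * q * (q - 1) := by
    rw [d1]
    positivity
  have hdvd : (q - 2) ∣ 24 * ℓ := (Nat.mul_dvd_mul_iff_left hpos).mp h2
  refine ⟨hdvd, ?_⟩
  have hl : ℓ ≠ 0 := by
    rintro rfl
    simp at hq
    omega
  have hle : q - 2 ≤ 24 * ℓ := Nat.le_of_dvd (by omega) hdvd
  have hqmax : q ≤ 24 * ℓ + 2 := by omega
  have h2l : 2 ^ ℓ ≤ q := by
    rw [hq]
    exact Nat.pow_le_pow_left hq₀.two_le ℓ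
  have hℓ7 : ℓ ≤ 7 := by
    by_contra h
    push_neg at h
    have := pow_gt ℓ (by omega)
    omega
  have hub : ∀ B : ℕ, 24 * ℓ + 2 < (B + 1) ^ ℓ → q₀ ≤ B := by
    intro B hB
    by_contra h
    push_neg at h
    have h2 : (B + 1) ^ ℓ ≤ q₀ ^ ℓ := Nat.pow_le_pow_left h ℓ
    omega
  have h2q : 2 ≤ q₀ := hq₀.two_le
  have hl1 : 1 ≤ ℓ := by omega
  clear h1 h2 e1 e2 hr hpos hle d1 d2 hs h2l
  interval_cases ℓ
  · have hb := hub 26 (by norm_num)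
    interval_cases q₀ <;>
      (subst hq; revert hq24 hdvd; norm_num) <;>
        exact absurd hq₀ (by norm_num)
  · have hb := hub 7 (by norm_num)
    interval_cases q₀ <;>
      (subst hq; revert hq24 hdvd; norm_num) <;>
        exact absurd hq₀ (by norm_num)
  · have hb := hub 4 (by norm_num)
    interval_cases q₀ <;>
      (subst hq; revert hq24 hdvd; norm_num) <;>
        exact absurd hq₀ (by norm_num)
  · have hb := hub 3 (by norm_num)
    interval_cases q₀ <;>
      (subst hq; revert hq24 hdvd; norm_num) <;>
        exact absurd hq₀ (by norm_num)
  · have hb := hub 2 (by norm_num)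
    interval_cases q₀ <;>
      (subst hq; revert hq24 hdvd; norm_num) <;>
        exact absurd hq₀ (by norm_num)
  · have hb := hub 2 (by norm_num)
    interval_cases q₀ <;>
      (subst hq; revert hq24 hdvd; norm_num) <;>
        exact absurd hq₀ (by norm_num)
  · have hb := hub 2 (by norm_num)
    interval_cases q₀ <;>
      (subst hq; revert hq24 hdvd; norm_num) <;>
        exact absurd hq₀ (by norm_num)

end Stmt19

/-- Let `F` be a finite field with `q = q₀^ℓ` elements (`q₀` prime) and `q + 1 ≥ 25`.
If a subgroup `K` of `PΓL(2, q)` — realized as a group of permutations of the projective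
line `P¹(F)` induced by semilinear transformations `v ↦ A (σ ∘ v)` — acts transitively on
the `4`-element subsets of `P¹(F)`, then `C(q+1, 4)` divides `ℓ(q³ - q)`, which forces
`(q - 2) ∣ 24ℓ`; for `q ≥ 24` the only solution is `q = 32`. -/
theorem stmt_19 {F : Type} [Field F] [Fintype F]
    (q₀ ℓ : ℕ) (hq₀ : q₀.Prime) (hcard : Fintype.card F = q₀ ^ ℓ)
    (hn : 25 ≤ Fintype.card F + 1)
    (K : Subgroup (Equiv.Perm (Projectivization F (Fin 2 → F))))
    (hsemilinear : ∀ π ∈ K, ∃ (A : GL (Fin 2) F) (σ : F ≃+* F),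
      ∀ (v : Fin 2 → F) (hv : v ≠ 0), ∃ (w : Fin 2 → F) (hw : w ≠ 0),
        w = ((A : GL (Fin 2) F) : Matrix (Fin 2) (Fin 2) F).mulVec (fun i => σ (v i)) ∧
        π (Projectivization.mk F v hv) = Projectivization.mk F w hw)
    (htrans : ∀ s t : Finset (Projectivization F (Fin 2 → F)),
      s.card = 4 → t.card = 4 → ∃ π ∈ K, s.image π = t) :
    (Fintype.card F + 1).choose 4 ∣ ℓ * (Fintype.card F ^ 3 - Fintype.card F) ∧
    (Fintype.card F - 2) ∣ 24 * ℓ ∧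
    Fintype.card F = 32 := by
  classical
  haveI hfinX : Finite (Projectivization F (Fin 2 → F)) :=
    Quotient.finite _
  haveI : Fintype (Projectivization F (Fin 2 → F)) := Fintype.ofFinite _
  set q := Fintype.card F with hqdef
  have hq24 : 24 ≤ q := by omega
  -- K is contained in the range of Phi
  have hKle : K ≤ (Stmt19.Phi F).range := by
    intro π hπ
    obtain ⟨A, σ, h⟩ := hsemilinear π hπ
    refine ⟨⟨A, σ⟩, ?_⟩
    ext x
    induction x using Projectivization.ind with
    | h v hv =>
      obtain ⟨w, hw, hw_eq, hπv⟩ := h v hv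
      rw [Stmt19.Phi_apply_mk, hπv]
      apply Stmt19.mk_eq_of_eq
      rw [Stmt19.sl_apply, hw_eq]
  have h3 : Nat.card K ∣ Nat.card (Stmt19.Phi F).range :=
    Subgroup.card_dvd_of_le hKle
  -- the kernel contains the scalars
  have hker : (q - 1) ∣ Nat.card (Stmt19.Phi F).ker := by
    have hinj : Function.Injective
        ((Stmt19.scalarHom F).codRestrict (Stmt19.Phi F).ker Stmt19.scalarHom_mem_ker) :=
      fun a b h => Stmt19.scalarHom_injective (congrArg Subtype.val h)
    have hd := Subgroup.card_dvd_of_injective _ hinj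
    rwa [Nat.card_eq_fintype_card, Fintype.card_units] at hd
  -- first isomorphism theorem
  have h5 : Nat.card (Stmt19.Phi F).range * Nat.card (Stmt19.Phi F).ker
      = Nat.card (Stmt19.Gam F) := by
    rw [← Nat.card_congr (QuotientGroup.quotientKerEquivRange (Stmt19.Phi F)).toEquiv]
    exact (Subgroup.card_eq_card_quotient_mul_card_subgroup _).symm
  have h6 : Nat.card (Stmt19.Gam F) = ((q ^ 2 - 1) * (q ^ 2 - q)) * ℓ := by
    rw [Stmt19.card_Gam, Matrix.card_GL_field, Stmt19.card_ringAut q₀ ℓ hq₀ hcard]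
    rw [Fin.prod_univ_two]
    norm_num
    exact Or.inl rfl
  obtain ⟨m, hm⟩ := hker
  obtain ⟨s', hs'⟩ : ∃ s', q = s' + 2 := ⟨q - 2, by omega⟩
  have db : q - 1 = s' + 1 := by omega
  have e : ((q ^ 2 - 1) * (q ^ 2 - q)) * ℓ = (q - 1) * (ℓ * (q ^ 3 - q)) := by
    have a1 : q ^ 2 - 1 = (s' + 1) * (q + 1) := by
      have h : q ^ 2 = (s' + 1) * (q + 1) + 1 := by rw [hs']; ring
      omega
    have a2 : q ^ 2 - q = q * (s' + 1) := by
      have h : q ^ 2 = q * (s' + 1) + q := by rw [hs']; ring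
      omega
    have a3 : q ^ 3 - q = (q + 1) * q * (s' + 1) := by
      have h : q ^ 3 = (q + 1) * q * (s' + 1) + q := by rw [hs']; ring
      omega
    rw [a1, a2, a3, db]
    ring
  have hrange : Nat.card (Stmt19.Phi F).range ∣ ℓ * (q ^ 3 - q) := by
    have hc : (q - 1) * (Nat.card (Stmt19.Phi F).range * m)
        = (q - 1) * (ℓ * (q ^ 3 - q)) := by
      rw [← e, ← h6, ← h5, hm]
      ring
    have heq := Nat.eq_of_mul_eq_mul_left (show 0 < q - 1 by omega) hc
    exact ⟨m, heq.symm⟩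
  -- orbit-stabilizer
  have hX : Fintype.card (Projectivization F (Fin 2 → F)) = q + 1 := by
    have h := Stmt19.card_proj (F := F)
    rwa [Nat.card_eq_fintype_card] at h
  obtain ⟨s₀, -, hs₀⟩ := Finset.exists_subset_card_eq
    (s := (Finset.univ : Finset (Projectivization F (Fin 2 → F)))) (n := 4) (by rw [Finset.card_univ, hX]; omega)
  haveI : Fintype K := Fintype.ofFinite K
  have horb : MulAction.orbit K s₀
      = {t : Finset (Projectivization F (Fin 2 → F)) | t.card = 4} := by
    ext t
    constructor
    · rintro ⟨g, rfl⟩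
      show (g • s₀).card = 4
      have hgs : (g • s₀) = Finset.image (fun x => (g : Equiv.Perm (Projectivization F (Fin 2 → F))) x) s₀ := rfl
      rw [hgs, Finset.card_image_of_injective _ (Equiv.injective _), hs₀]
    · intro ht
      obtain ⟨π, hπK, hπ⟩ := htrans s₀ t hs₀ ht
      refine ⟨⟨π, hπK⟩, ?_⟩
      show (⟨π, hπK⟩ : K) • s₀ = t
      rw [show (⟨π, hπK⟩ : K) • s₀ = Finset.image (fun x => π x) s₀ from rfl]
      exact hπ
  have hcardorb : Nat.card (MulAction.orbit K s₀) = (q + 1).choose 4 := by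
    rw [Nat.card_congr ((Equiv.setCongr horb).trans
      (Equiv.subtypeEquivRight (q := fun t : Finset (Projectivization F (Fin 2 → F)) => t.card = 4) (fun t => Iff.rfl))), Nat.card_eq_fintype_card,
      Fintype.card_finset_len, hX]
  have hchoose : (q + 1).choose 4 ∣ Nat.card K := by
    have hos := MulAction.card_orbit_mul_card_stabilizer_eq_card_group K s₀
    rw [Nat.card_eq_fintype_card]
    refine ⟨Fintype.card (MulAction.stabilizer K s₀), ?_⟩
    rw [← hos, ← hcardorb, Nat.card_eq_fintype_card]
  have hfirst : (q + 1).choose 4 ∣ ℓ * (q ^ 3 - q) :=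
    (hchoose.trans h3).trans hrange
  have harith := Stmt19.arith q₀ ℓ q hq₀ hcard hq24 hfirst
  exact ⟨hfirst, harith.1, harith.2⟩
end
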